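/- arXiv:1311.0637 — 4 statements merged into one kernel-verified Lean document; each statement's English description precedes it below -/
import Mathlib

section
/- In the generalized Thompson group G = F_{n,∞} = ⟨x_0, x_1, ... | x_i^{x_j} = x_{i+n-1} for i > j ≥ 0⟩, the abelianization G/G' is free abelian of rank n, with basis the images of x_0, x_1, ..., x_{n-1}. -/
/-- The defining relators of the generalised Thompson group `F_{n,∞}`:
`x_j⁻¹ x_i x_j x_{i+n-1}⁻¹` for `i > j ≥ 0`. -/
def thompsonRels (n : ℕ) : Set (FreeGroup ℕ) :=
  {r | ∃ i j : ℕ, j < i ∧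
    r = (FreeGroup.of j)⁻¹ * FreeGroup.of i * FreeGroup.of j * (FreeGroup.of (i + n - 1))⁻¹}

/-- The generalised Thompson group `F_{n,∞}`. -/
abbrev FnInfty (n : ℕ) : Type := PresentedGroup (thompsonRels n)

/-- The generator `x_i` of `F_{n,∞}`. -/
def xg (n i : ℕ) : FnInfty n := PresentedGroup.of i

/-- canonical representative index: `0 ↦ 0`, `i ≥ 1 ↦ ((i-1) mod (n-1)) + 1` -/
def tidx (n i : ℕ) : ℕ := if i = 0 then 0 else (i - 1) % (n - 1) + 1

lemma tidx_lt {n : ℕ} (hn : 2 ≤ n) (i : ℕ) : tidx n i < n := by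
  unfold tidx
  split
  · omega
  · have h : (i - 1) % (n - 1) < n - 1 := Nat.mod_lt _ (by omega)
    omega

lemma tidx_eq_self {n i : ℕ} (hi : i < n) : tidx n i = i := by
  unfold tidx
  split
  · omega
  · rw [Nat.mod_eq_of_lt (by omega)]; omega

lemma tidx_shift {n i : ℕ} (hn : 2 ≤ n) (hi : 1 ≤ i) : tidx n (i + n - 1) = tidx n i := by
  unfold tidx
  rw [if_neg (by omega), if_neg (by omega)]
  have h : i + n - 1 - 1 = (i - 1) + (n - 1) := by omega
  rw [h, Nat.add_mod_right]

/-- the basic relation in `FnInfty` -/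
lemma xg_rel (n : ℕ) {i j : ℕ} (hij : j < i) :
    (xg n j)⁻¹ * xg n i * xg n j = xg n (i + n - 1) := by
  have hmem : ((FreeGroup.of j)⁻¹ * FreeGroup.of i * FreeGroup.of j *
      (FreeGroup.of (i + n - 1))⁻¹ : FreeGroup ℕ) ∈ thompsonRels n := ⟨i, j, hij, rfl⟩
  have h1 : ((QuotientGroup.mk ((FreeGroup.of j)⁻¹ * FreeGroup.of i * FreeGroup.of j *
      (FreeGroup.of (i + n - 1))⁻¹ : FreeGroup ℕ)) : FnInfty n) = 1 := by
    rw [QuotientGroup.eq_one_iff]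
    exact Subgroup.subset_normalClosure hmem
  have h2 : (xg n j)⁻¹ * xg n i * xg n j * (xg n (i + n - 1))⁻¹ = 1 := by
    simp only [xg, PresentedGroup.of, ← map_inv, ← map_mul]; exact h1
  have := mul_eq_one_iff_eq_inv.mp h2
  rw [this]; group

lemma ab_shift (n : ℕ) {i : ℕ} (hi : 1 ≤ i) :
    Abelianization.of (xg n (i + n - 1)) = Abelianization.of (xg n i) := by
  rw [← xg_rel n (show 0 < i from hi)]
  simp only [map_mul, map_inv]
  rw [mul_comm ((Abelianization.of (xg n 0))⁻¹) (Abelianization.of (xg n i))]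
  group

lemma ab_tidx (n : ℕ) (hn : 2 ≤ n) (i : ℕ) :
    Abelianization.of (xg n (tidx n i)) = Abelianization.of (xg n i) := by
  induction i using Nat.strong_induction_on with
  | _ i ih =>
    rcases lt_or_ge i n with h | h
    · rw [tidx_eq_self h]
    · obtain ⟨i', h1, h2⟩ : ∃ i', 1 ≤ i' ∧ i' + n - 1 = i := ⟨i - (n - 1), by omega, by omega⟩
      subst h2
      rw [tidx_shift hn h1, ab_shift n h1]
      exact ih i' (by omega)

/-- The abelianization of `F_{n,∞}` is free abelian of rank `n`, with basis the images of
`x_0, ..., x_{n-1}`. -/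
theorem stmt_4 (n : ℕ) (hn : 2 ≤ n) :
    ∃ b : Module.Basis (Fin n) ℤ (Additive (Abelianization (FnInfty n))),
      ∀ i : Fin n, b i = Additive.ofMul (Abelianization.of (xg n i)) := by
  classical
  -- the map to the free abelian group
  set fidx : ℕ → Fin n := fun i => (⟨tidx n i, tidx_lt hn i⟩ : Fin n) with hfidx
  set fgen : ℕ → Multiplicative (Fin n → ℤ) :=
    fun i => Multiplicative.ofAdd (Pi.single (fidx i) 1) with hfgen
  have hrel : ∀ r ∈ thompsonRels n, FreeGroup.lift fgen r = 1 := by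
    rintro r ⟨i, j, hij, rfl⟩
    have hkey : fgen (i + n - 1) = fgen i := by
      have hfx : fidx (i + n - 1) = fidx i := Fin.ext (tidx_shift hn (by omega))
      simp only [hfgen, hfx]
    simp only [map_mul, map_inv, FreeGroup.lift_apply_of, hkey]
    rw [mul_comm ((fgen j)⁻¹) (fgen i)]
    group
  set φ : FnInfty n →* Multiplicative (Fin n → ℤ) := PresentedGroup.toGroup hrel with hφ
  set Φ : Abelianization (FnInfty n) →* Multiplicative (Fin n → ℤ) :=
    Abelianization.lift φ with hΦ
  set F : Additive (Abelianization (FnInfty n)) →+ (Fin n → ℤ) :=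
    MonoidHom.toAdditiveLeft Φ with hF
  -- the reverse linear map
  set g : Fin n → Additive (Abelianization (FnInfty n)) :=
    fun i => Additive.ofMul (Abelianization.of (xg n i)) with hg
  set L : (Fin n → ℤ) →ₗ[ℤ] Additive (Abelianization (FnInfty n)) :=
    (Pi.basisFun ℤ (Fin n)).constr ℤ g with hL
  have hF_of : ∀ k : ℕ, F (Additive.ofMul (Abelianization.of (xg n k)))
      = Pi.single (fidx k) 1 := by
    intro k
    show (Φ (Abelianization.of (xg n k))).toAdd = _
    rw [hΦ, Abelianization.lift_apply_of, hφ]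
    show (PresentedGroup.toGroup hrel (PresentedGroup.of k)).toAdd = _
    rw [PresentedGroup.toGroup.of]
    rfl
  have hL_single : ∀ i : Fin n, L (Pi.single i 1) = g i := by
    intro i
    rw [← Pi.basisFun_apply, hL, Module.Basis.constr_basis]
  have hright : ∀ v : Fin n → ℤ, F (L v) = v := by
    have heq : F.toIntLinearMap.comp L = LinearMap.id := by
      apply (Pi.basisFun ℤ (Fin n)).ext
      intro i
      rw [LinearMap.comp_apply, LinearMap.id_apply, Pi.basisFun_apply, hL_single,
        AddMonoidHom.coe_toIntLinearMap, hg]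
      rw [hF_of i]
      have hfx : fidx ↑i = i := Fin.ext (tidx_eq_self i.2)
      rw [hfx]
    intro v
    have := LinearMap.congr_fun heq v
    simpa using this
  have hleft : ∀ x : Additive (Abelianization (FnInfty n)), L (F x) = x := by
    have hM : (MonoidHom.toAdditive.symm (L.toAddMonoidHom.comp F) :
        Abelianization (FnInfty n) →* Abelianization (FnInfty n)) = MonoidHom.id _ := by
      apply Abelianization.hom_ext
      apply PresentedGroup.ext
      intro k
      show Additive.toMul (L (F (Additive.ofMul (Abelianization.of (xg n k)))))
          = Abelianization.of (xg n k)
      rw [hF_of k, hL_single, hg]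
      exact congrArg Additive.toMul (congrArg Additive.ofMul (ab_tidx n hn k))
    intro x
    have := DFunLike.congr_fun hM (Additive.toMul x)
    exact congrArg Additive.ofMul this
  set e : Additive (Abelianization (FnInfty n)) ≃+ (Fin n → ℤ) :=
    AddEquiv.mk' ⟨F, L, hleft, hright⟩ F.map_add with he
  refine ⟨(Pi.basisFun ℤ (Fin n)).map e.toIntLinearEquiv.symm, ?_⟩
  intro i
  rw [Module.Basis.map_apply, Pi.basisFun_apply]
  show e.symm (Pi.single i 1) = _
  show L (Pi.single i 1) = _
  rw [hL_single, hg]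
end

section
/- In the generalized Thompson group G = F_{n,∞}, for any homomorphism χ : G → ℝ one has χ(x_{i+n-1}) = χ(x_i) for all i ≥ 1; consequently χ is determined by its values on x_0, x_1, ..., x_{n-1}, and the real vector space Hom(G, ℝ) has dimension n. -/
namespace ThompsonAux

/-- The relation holds in the presented group. -/
lemma rel_one (n i j : ℕ) (hj : j < i) :
    (xg n j)⁻¹ * xg n i * xg n j * (xg n (i + n - 1))⁻¹ = 1 := by
  have hmem : ((FreeGroup.of j)⁻¹ * FreeGroup.of i * FreeGroup.of j *
      (FreeGroup.of (i + n - 1))⁻¹) ∈ Subgroup.normalClosure (thompsonRels n) :=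
    Subgroup.subset_normalClosure ⟨i, j, hj, rfl⟩
  have h1 : PresentedGroup.mk (thompsonRels n)
      ((FreeGroup.of j)⁻¹ * FreeGroup.of i * FreeGroup.of j *
        (FreeGroup.of (i + n - 1))⁻¹) = 1 := (QuotientGroup.eq_one_iff _).2 hmem
  simpa [xg, PresentedGroup.of, map_mul, map_inv] using h1

lemma chi_step (n : ℕ) (χ : Additive (FnInfty n) →+ ℝ) (i : ℕ) (hi : 1 ≤ i) :
    χ (Additive.ofMul (xg n (i + n - 1))) = χ (Additive.ofMul (xg n i)) := by
  have h1 := rel_one n i 0 hi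
  have h2 := congrArg (fun g => χ (Additive.ofMul g)) h1
  simp only [ofMul_mul, ofMul_inv, map_add, map_neg, ofMul_one, map_zero] at h2
  linarith

lemma chi_gen (n : ℕ) (hn : 2 ≤ n) (χ χ' : Additive (FnInfty n) →+ ℝ)
    (h : ∀ i : ℕ, i < n → χ (Additive.ofMul (xg n i)) = χ' (Additive.ofMul (xg n i))) :
    ∀ i : ℕ, χ (Additive.ofMul (xg n i)) = χ' (Additive.ofMul (xg n i)) := by
  intro i
  induction i using Nat.strong_induction_on with
  | _ i ih =>
    by_cases hi : i < n
    · exact h i hi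
    · push_neg at hi
      set j := i - (n - 1) with hj
      have hj1 : 1 ≤ j := by omega
      have hji : j + n - 1 = i := by omega
      have hjlt : j < i := by omega
      rw [← hji, chi_step n χ j hj1, chi_step n χ' j hj1]
      exact ih j hjlt

lemma hom_ext (n : ℕ) (χ χ' : Additive (FnInfty n) →+ ℝ)
    (h : ∀ i : ℕ, χ (Additive.ofMul (xg n i)) = χ' (Additive.ofMul (xg n i))) : χ = χ' := by
  have : AddMonoidHom.toMultiplicativeRight χ = AddMonoidHom.toMultiplicativeRight χ' := by
    apply PresentedGroup.ext
    intro x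
    simpa [xg] using congrArg Multiplicative.ofAdd (h x)
  exact AddMonoidHom.toMultiplicativeRight.injective this

/-- The function on generator indices associated to a vector `v : Fin n → ℝ`. -/
noncomputable def fv (n : ℕ) (hn : 2 ≤ n) (v : Fin n → ℝ) : ℕ → ℝ :=
  fun k => if k = 0 then v ⟨0, by omega⟩
    else v ⟨(k - 1) % (n - 1) + 1, by
      have := Nat.mod_lt (k - 1) (show 0 < n - 1 by omega); omega⟩

lemma fv_periodic (n : ℕ) (hn : 2 ≤ n) (v : Fin n → ℝ) (i : ℕ) (hi : 1 ≤ i) :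
    fv n hn v (i + n - 1) = fv n hn v i := by
  have h1 : i + n - 1 ≠ 0 := by omega
  have h2 : i ≠ 0 := by omega
  simp only [fv, if_neg h1, if_neg h2]
  congr 1
  apply Fin.ext
  simp only []
  have : i + n - 1 - 1 = (i - 1) + (n - 1) := by omega
  rw [this, Nat.add_mod_right]

lemma fv_lt (n : ℕ) (hn : 2 ≤ n) (v : Fin n → ℝ) (k : ℕ) (hk : k < n) :
    fv n hn v k = v ⟨k, hk⟩ := by
  by_cases h0 : k = 0
  · subst h0; simp [fv]
  · simp only [fv, if_neg h0]
    congr 1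
    apply Fin.ext
    have : (k - 1) % (n - 1) = k - 1 := Nat.mod_eq_of_lt (by omega)
    simp only [this]
    omega

lemma fv_rels (n : ℕ) (hn : 2 ≤ n) (v : Fin n → ℝ) :
    ∀ r ∈ thompsonRels n,
      FreeGroup.lift (fun k => Multiplicative.ofAdd (fv n hn v k)) r = 1 := by
  rintro r ⟨i, j, hij, rfl⟩
  have hb : fv n hn v (i + n - 1) = fv n hn v i := fv_periodic n hn v i (by omega)
  simp only [map_mul, map_inv, FreeGroup.lift_apply_of, hb]
  simp [mul_comm, mul_left_comm, mul_assoc]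

/-- The homomorphism associated to a vector `v : Fin n → ℝ`. -/
noncomputable def chiv (n : ℕ) (hn : 2 ≤ n) (v : Fin n → ℝ) : Additive (FnInfty n) →+ ℝ :=
  MonoidHom.toAdditiveLeft (PresentedGroup.toGroup (fv_rels n hn v))

lemma chiv_apply (n : ℕ) (hn : 2 ≤ n) (v : Fin n → ℝ) (k : ℕ) :
    chiv n hn v (Additive.ofMul (xg n k)) = fv n hn v k := by
  simp [chiv, xg, PresentedGroup.toGroup.of]

/-- Evaluation at the first `n` generators, as a linear map. -/
noncomputable def evalMap (n : ℕ) : (Additive (FnInfty n) →+ ℝ) →ₗ[ℝ] (Fin n → ℝ) where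
  toFun χ := fun k => χ (Additive.ofMul (xg n k))
  map_add' χ χ' := rfl
  map_smul' r χ := rfl

lemma evalMap_bijective (n : ℕ) (hn : 2 ≤ n) : Function.Bijective (evalMap n) := by
  constructor
  · intro χ χ' h
    apply hom_ext
    apply chi_gen n hn
    intro i hi
    have := congrFun h ⟨i, hi⟩
    simpa [evalMap] using this
  · intro v
    refine ⟨chiv n hn v, ?_⟩
    funext k
    simp only [evalMap, LinearMap.coe_mk, AddHom.coe_mk]
    rw [chiv_apply, fv_lt n hn v k k.isLt]

end ThompsonAux

/-- For any homomorphism `χ : F_{n,∞} → ℝ` one has `χ(x_{i+n-1}) = χ(x_i)` for `i ≥ 1`;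
consequently `χ` is determined by its values on `x_0, ..., x_{n-1}`, and `Hom(F_{n,∞}, ℝ)` is an
`ℝ`-vector space of dimension `n`. -/
theorem stmt_5 (n : ℕ) (hn : 2 ≤ n) :
    (∀ χ : Additive (FnInfty n) →+ ℝ, ∀ i : ℕ, 1 ≤ i →
        χ (Additive.ofMul (xg n (i + n - 1))) = χ (Additive.ofMul (xg n i))) ∧
    (∀ χ χ' : Additive (FnInfty n) →+ ℝ,
        (∀ i : ℕ, i < n → χ (Additive.ofMul (xg n i)) = χ' (Additive.ofMul (xg n i))) →
        χ = χ') ∧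
    Module.rank ℝ (Additive (FnInfty n) →+ ℝ) = n := by
  refine ⟨fun χ i hi => ThompsonAux.chi_step n χ i hi,
    fun χ χ' h => ThompsonAux.hom_ext n χ χ' (ThompsonAux.chi_gen n hn χ χ' h), ?_⟩
  have e := LinearEquiv.ofBijective (ThompsonAux.evalMap n) (ThompsonAux.evalMap_bijective n hn)
  rw [e.rank_eq, rank_fin_fun]
end

section
/- Let G = F_{n,∞} and M = ⟨x_1, x_2, ..., x_n⟩ ≤ G. Then the map sending x_i to x_{i-1} for i ≥ 1 extends to a group isomorphism θ : M → G. -/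
/-- The subgroup `M = ⟨x_1, ..., x_n⟩` of `F_{n,∞}`. -/
def Msub (n : ℕ) : Subgroup (FnInfty n) := Subgroup.closure (xg n '' {i | 1 ≤ i ∧ i ≤ n})


namespace ThompsonAux

variable (d : ℕ)

/-- Left multiplication by generator `x_a` on normal-form (nondecreasing) lists:
`x_a * x_b = x_b * x_{a+d}` when `a > b`. -/
def ins : ℕ → List ℕ → List ℕ
  | a, [] => [a]
  | a, b :: t => if a ≤ b then a :: b :: t else b :: ins (a + d) t

@[simp] lemma ins_nil (a : ℕ) : ins d a [] = [a] := rfl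

lemma ins_cons (a b : ℕ) (t : List ℕ) :
    ins d a (b :: t) = if a ≤ b then a :: b :: t else b :: ins d (a + d) t := rfl

lemma ins_cons_le {a b : ℕ} (h : a ≤ b) (t : List ℕ) :
    ins d a (b :: t) = a :: b :: t := by rw [ins_cons, if_pos h]

lemma ins_cons_gt {a b : ℕ} (h : b < a) (t : List ℕ) :
    ins d a (b :: t) = b :: ins d (a + d) t := by rw [ins_cons, if_neg (by omega)]

lemma ins_eq_cons {a : ℕ} {w : List ℕ} (h : ∀ b ∈ w.head?, a ≤ b) :
    ins d a w = a :: w := by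
  cases w with
  | nil => rfl
  | cons b t => exact ins_cons_le d (h b rfl) t

/-- The fundamental commutation: `ins i ∘ ins j = ins j ∘ ins (i+d)` for `j < i`. -/
lemma ins_comm : ∀ (w : List ℕ) {i j : ℕ}, j < i →
    ins d i (ins d j w) = ins d j (ins d (i + d) w) := by
  intro w
  induction w with
  | nil =>
    intro i j h
    rw [ins_nil, ins_nil, ins_cons_gt d h, ins_nil, ins_eq_cons]
    intro b hb; simp at hb; omega
  | cons b t ih =>
    intro i j h
    by_cases hjb : j ≤ b
    · rw [ins_cons_le d hjb, ins_cons_gt d h]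
      by_cases hib : i + d ≤ b
      · rw [ins_cons_le d hib, ins_cons_le d (le_trans (le_of_lt h) (by omega))]
      · rw [ins_cons_gt d (by omega : b < i + d), ins_cons_le d hjb]
    · rw [ins_cons_gt d (by omega), ins_cons_gt d (by omega : b < i),
        ins_cons_gt d (by omega : b < i + d), ins_cons_gt d (by omega : b < j),
        ih (by omega : j + d < i + d)]

lemma ins_length (a : ℕ) (w : List ℕ) : (ins d a w).length = w.length + 1 := by
  induction w generalizing a with
  | nil => rfl
  | cons b t ih =>
    rw [ins_cons]; split <;> simp [ih]

lemma ins_inj : ∀ (w : List ℕ) (a : ℕ) (w' : List ℕ),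
    ins d a w = ins d a w' → w = w' := by
  intro w
  induction w with
  | nil =>
    intro a w' h
    have := congrArg List.length h
    rw [ins_length, ins_length] at this
    simp at this
    simp [this.symm]
  | cons b t ih =>
    intro a w' h
    cases w' with
    | nil =>
      have := congrArg List.length h
      rw [ins_length, ins_length] at this
      simp at this
    | cons b' t' =>
      rw [ins_cons, ins_cons] at h
      by_cases h1 : a ≤ b <;> by_cases h2 : a ≤ b' <;>
        [skip; skip; skip; skip] <;>
        simp only [if_pos, if_neg, h1, h2, if_true, if_false] at h <;>
        simp only [List.cons.injEq] at h
      · rw [h.2.1, h.2.2]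
      · omega
      · omega
      · rw [h.1, ih (a + d) t' h.2]



/-- Apply a word (list of generator indices) to a state. -/
def actW (l w : List ℕ) : List ℕ := List.foldr (ins d) w l

@[simp] lemma actW_nil (w : List ℕ) : actW d [] w = w := rfl

@[simp] lemma actW_cons (a : ℕ) (l w : List ℕ) :
    actW d (a :: l) w = ins d a (actW d l w) := rfl

lemma actW_append (u v w : List ℕ) :
    actW d (u ++ v) w = actW d u (actW d v w) := List.foldr_append ..

/-- normalization -/
def nrm (l : List ℕ) : List ℕ := actW d l []

lemma actW_ins (a : ℕ) (l w : List ℕ) :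
    actW d (ins d a l) w = ins d a (actW d l w) := by
  induction l generalizing a with
  | nil => rfl
  | cons b t ih =>
    rw [ins_cons]
    by_cases h : a ≤ b
    · rw [if_pos h]; rfl
    · rw [if_neg h, actW_cons, actW_cons, ih, ins_comm d _ (by omega : b < a)]

lemma actW_actW (u v w : List ℕ) :
    actW d (actW d u v) w = actW d u (actW d v w) := by
  induction u with
  | nil => rfl
  | cons a u ih => rw [actW_cons, actW_ins, ih, actW_cons]

lemma actW_nrm (l w : List ℕ) : actW d (nrm d l) w = actW d l w := by
  rw [nrm, actW_actW]; rfl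

/-- Sorted = nondecreasing -/
abbrev Srt (l : List ℕ) : Prop := List.Chain' (· ≤ ·) l

lemma head?_ins_cases (a : ℕ) (w : List ℕ) :
    (ins d a w).head? = some a ∨ (ins d a w).head? = w.head? := by
  cases w with
  | nil => left; rfl
  | cons b t =>
    rw [ins_cons]
    by_cases h : a ≤ b
    · rw [if_pos h]; left; rfl
    · rw [if_neg h]; right; rfl

lemma srt_ins {w : List ℕ} (hw : Srt w) (a : ℕ) : Srt (ins d a w) := by
  induction w generalizing a with
  | nil => simp [Srt, List.Chain']
  | cons b t ih =>
    rw [ins_cons]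
    by_cases h : a ≤ b
    · rw [if_pos h]
      exact List.isChain_cons.2 ⟨fun y hy => by simp at hy; omega, hw⟩
    · rw [if_neg h]
      have hw' := List.isChain_cons.1 hw
      refine List.isChain_cons.2 ⟨?_, ih hw'.2 (a + d)⟩
      intro y hy
      rcases head?_ins_cases d (a + d) t with hc | hc
      · rw [hc] at hy; simp at hy; omega
      · rw [hc] at hy; exact hw'.1 y hy

lemma srt_nrm (l : List ℕ) : Srt (nrm d l) := by
  induction l with
  | nil => simp [nrm, Srt, List.Chain']
  | cons a l ih => exact srt_ins d ih a

lemma nrm_of_srt {l : List ℕ} (h : Srt l) : nrm d l = l := by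
  induction l with
  | nil => rfl
  | cons a l ih =>
    have h' := List.isChain_cons.1 h
    have : nrm d (a :: l) = ins d a (nrm d l) := rfl
    rw [this, ih h'.2, ins_eq_cons d h'.1]

lemma srt_all {l : List ℕ} (h : Srt l) {a : ℕ} (ha : a ∈ l.head?) :
    ∀ x ∈ l, a ≤ x := by
  intro x hx
  cases l with
  | nil => simp at hx
  | cons b t =>
    simp at ha; subst ha
    rcases List.mem_cons.1 hx with rfl | hx
    · exact le_refl x
    · have := List.isChain_iff_pairwise.1 h
      exact (List.pairwise_cons.1 this).1 x hx

/-- `map (+c)` equivariance -/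
lemma ins_map_add (c a : ℕ) (w : List ℕ) :
    ins d (a + c) (w.map (· + c)) = (ins d a w).map (· + c) := by
  induction w generalizing a with
  | nil => rfl
  | cons b t ih =>
    simp only [List.map_cons]
    rw [ins_cons, ins_cons]
    by_cases h : a ≤ b
    · rw [if_pos h, if_pos (by omega)]; rfl
    · rw [if_neg h, if_neg (by omega)]
      simp only [List.map_cons, List.cons.injEq, true_and]
      rw [show a + c + d = a + d + c by omega, ih]

lemma actW_map_add (c : ℕ) (u w : List ℕ) :
    actW d (u.map (· + c)) (w.map (· + c)) = (actW d u w).map (· + c) := by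
  induction u with
  | nil => rfl
  | cons a u ih =>
    simp only [List.map_cons, actW_cons]
    rw [ih, ins_map_add]

/-- commuting a small generator from the right across a word of larger generators -/
lemma actW_ins_low {q : List ℕ} {a : ℕ} (h : ∀ b ∈ q, a < b) (w : List ℕ) :
    actW d q (ins d a w) = ins d a (actW d (q.map (· + d)) w) := by
  induction q with
  | nil => rfl
  | cons c q ih =>
    simp only [actW_cons, List.map_cons]
    rw [ih (fun b hb => h b (List.mem_cons_of_mem _ hb)),
      ins_comm d _ (h c List.mem_cons_self)]

/-- The key structure lemma: inserting into the single-element state `[a]`. -/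
lemma actW_single {p : List ℕ} (hp : Srt p) (a : ℕ) :
    actW d p [a] = p.takeWhile (· ≤ a) ++ a :: (p.dropWhile (· ≤ a)).map (· + d) := by
  induction p with
  | nil => rfl
  | cons b p ih =>
    have hp := List.isChain_cons.1 hp
    have hble : ∀ x ∈ p, b ≤ x := by
      intro x hx
      cases p with
      | nil => simp at hx
      | cons c t =>
        have hbc : b ≤ c := hp.1 c rfl
        have := srt_all hp.2 (a := c) rfl x hx
        omega
    by_cases h : b ≤ a
    · rw [actW_cons, ih hp.2, List.takeWhile_cons_of_pos (by simpa using h),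
        List.dropWhile_cons_of_pos (by simpa using h)]
      apply ins_eq_cons
      intro y hy
      rcases hc : p.takeWhile (· ≤ a) with _ | ⟨c, tw⟩
      · rw [hc] at hy; simp at hy; omega
      · rw [hc] at hy; simp at hy; subst hy
        exact hble c ((List.takeWhile_sublist _).subset (hc ▸ (List.mem_cons_self (a := c) (l := tw))))
    · have hall : ∀ x ∈ p, a < x := by
        intro x hx
        have hb := hp.1
        cases p with
        | nil => simp at hx
        | cons c t =>
          have hbc : b ≤ c := hb c rfl
          have := srt_all hp.2 (a := c) rfl x hx
          omega
      have htw : p.takeWhile (· ≤ a) = [] := by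
        apply List.takeWhile_eq_nil_iff.2
        intro hl
        have := hall (p.get ⟨0, hl⟩) (List.get_mem ..)
        simp only [List.get_eq_getElem, decide_eq_true_eq] at this ⊢
        omega
      have hdw : p.dropWhile (· ≤ a) = p := by
        apply List.dropWhile_eq_self_iff.2
        intro hl
        have := hall (p.get ⟨0, hl⟩) (List.get_mem ..)
        simp only [List.get_eq_getElem, decide_eq_true_eq] at this ⊢
        omega
      rw [actW_cons, ih hp.2, htw, hdw, List.takeWhile_cons_of_neg (by simpa using h),
        List.dropWhile_cons_of_neg (by simpa using h), List.nil_append,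
        ins_cons_gt d (by omega : a < b)]
      simp only [List.map_cons, List.nil_append, List.cons.injEq, true_and]
      apply ins_eq_cons
      intro y hy
      cases p with
      | nil => simp at hy
      | cons c t =>
        simp at hy
        have : b ≤ c := hp.1 c rfl
        omega


/-- unique splitting of a list as (≤ a) part ++ a :: (> a) part -/
lemma split_unique {a : ℕ} : ∀ (t m t' m' : List ℕ),
    (∀ x ∈ t, x ≤ a) → (∀ x ∈ m, a < x) → (∀ x ∈ t', x ≤ a) → (∀ x ∈ m', a < x) →
    t ++ a :: m = t' ++ a :: m' → t = t' ∧ m = m' := by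
  intro t
  induction t with
  | nil =>
    intro m t' m' _ hm ht' hm' h
    cases t' with
    | nil => simp at h; exact ⟨rfl, h⟩
    | cons c t'' =>
      exfalso
      simp at h
      obtain ⟨h1, h2⟩ := h
      have : a ∈ m := by rw [h2]; exact List.mem_append_right _ List.mem_cons_self
      exact lt_irrefl a (hm a this)
  | cons c t ih =>
    intro m t' m' ht hm ht' hm' h
    cases t' with
    | nil =>
      exfalso
      simp at h
      obtain ⟨h1, h2⟩ := h
      have : a ∈ m' := by rw [← h2]; exact List.mem_append_right _ List.mem_cons_self
      exact lt_irrefl a (hm' a this)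
    | cons c' t'' =>
      simp only [List.cons_append, List.cons.injEq] at h
      obtain ⟨rfl, h2⟩ := h
      obtain ⟨h3, h4⟩ := ih m t'' m' (fun x hx => ht x (List.mem_cons_of_mem _ hx)) hm
        (fun x hx => ht' x (List.mem_cons_of_mem _ hx)) hm' h2
      exact ⟨by rw [h3], h4⟩

lemma all_dropWhile_gt {p : List ℕ} (hp : Srt p) (a : ℕ) :
    ∀ x ∈ p.dropWhile (· ≤ a), a < x := by
  induction p with
  | nil => intro x hx; simp at hx
  | cons b t ih =>
    have hp' := List.isChain_cons.1 hp
    by_cases h : b ≤ a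
    · rw [List.dropWhile_cons_of_pos (by simpa using h)]
      exact ih hp'.2
    · rw [List.dropWhile_cons_of_neg (by simpa using h)]
      intro x hx
      rcases List.mem_cons.1 hx with rfl | hx
      · omega
      · cases t with
        | nil => simp at hx
        | cons c t' =>
          have hbc : b ≤ c := hp'.1 c rfl
          have := srt_all hp'.2 (a := c) rfl x hx
          omega

lemma all_takeWhile_le (p : List ℕ) (a : ℕ) :
    ∀ x ∈ p.takeWhile (· ≤ a), x ≤ a := by
  intro x hx
  simpa using List.mem_takeWhile_imp hx

/-- Core right-cancellation step: acting on `[a]` is injective on sorted lists. -/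
lemma core_inj {p q : List ℕ} (hp : Srt p) (hq : Srt q) (a : ℕ)
    (h : actW d p [a] = actW d q [a]) : p = q := by
  rw [actW_single d hp a, actW_single d hq a] at h
  have hmp : ∀ x ∈ (p.dropWhile (· ≤ a)).map (· + d), a < x := by
    intro x hx
    simp only [List.mem_map] at hx
    obtain ⟨y, hy, rfl⟩ := hx
    have := all_dropWhile_gt hp a y hy
    show a < y + d
    omega
  have hmq : ∀ x ∈ (q.dropWhile (· ≤ a)).map (· + d), a < x := by
    intro x hx
    simp only [List.mem_map] at hx
    obtain ⟨y, hy, rfl⟩ := hx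
    have := all_dropWhile_gt hq a y hy
    show a < y + d
    omega
  obtain ⟨h1, h2⟩ := split_unique _ _ _ _ (all_takeWhile_le p a) hmp
    (all_takeWhile_le q a) hmq h
  have h3 : p.dropWhile (· ≤ a) = q.dropWhile (· ≤ a) := by
    have : Function.Injective (fun x : ℕ => x + d) := fun x y hxy => by simpa using hxy
    exact List.map_injective_iff.2 this h2
  calc p = p.takeWhile (· ≤ a) ++ p.dropWhile (· ≤ a) := (List.takeWhile_append_dropWhile ..).symm
    _ = q.takeWhile (· ≤ a) ++ q.dropWhile (· ≤ a) := by rw [h1, h3]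
    _ = q := List.takeWhile_append_dropWhile ..

/-- Full right cancellation at the list level. -/
lemma right_cancel_list : ∀ (r p q : List ℕ), Srt p → Srt q →
    actW d p (actW d r []) = actW d q (actW d r []) → p = q := by
  intro r
  induction r with
  | nil =>
    intro p q hp hq h
    have h' : nrm d p = nrm d q := by simpa only [actW_nil, nrm] using h
    calc p = nrm d p := (nrm_of_srt d hp).symm
      _ = nrm d q := h'
      _ = q := nrm_of_srt d hq
  | cons a r ih =>
    intro p q hp hq h
    -- actW p (ins a X) = actW (p ++ [a]) X
    have key : ∀ (u : List ℕ), actW d u (actW d (a :: r) []) =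
        actW d (nrm d (u ++ [a])) (actW d r []) := by
      intro u
      rw [actW_nrm, actW_append]
      rfl
    rw [key p, key q] at h
    have := ih (nrm d (p ++ [a])) (nrm d (q ++ [a])) (srt_nrm ..) (srt_nrm ..) h
    -- nrm (p ++ [a]) = actW p [a]
    have e : ∀ u : List ℕ, nrm d (u ++ [a]) = actW d u [a] := by
      intro u; rw [nrm, actW_append]; rfl
    rw [e p, e q] at this
    exact core_inj d hp hq a this


lemma srt_map_add (c : ℕ) {l : List ℕ} (h : Srt l) : Srt (l.map (· + c)) := by
  rw [Srt, List.Chain', List.isChain_map]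
  exact List.IsChain.imp (fun a b hab => by omega) h

lemma all_gt_of_srt_cons {b : ℕ} {q : List ℕ} (hq : Srt (b :: q)) {a : ℕ} (h : a < b) :
    ∀ x ∈ b :: q, a < x := by
  intro x hx
  rcases List.mem_cons.1 hx with rfl | hx
  · exact h
  · have := srt_all hq (a := b) rfl x (List.mem_cons_of_mem _ hx)
    omega

/-- Ore condition: common right multiples, at the list level. -/
lemma oreI : ∀ (N : ℕ) (p q : List ℕ), p.length + q.length ≤ N → Srt p → Srt q →
    ∃ c dd : List ℕ, ∀ w, actW d p (actW d c w) = actW d q (actW d dd w) := by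
  intro N
  induction N with
  | zero =>
    intro p q hlen _ _
    have hp : p = [] := List.length_eq_zero_iff.1 (by omega)
    have hq : q = [] := List.length_eq_zero_iff.1 (by omega)
    subst hp; subst hq
    exact ⟨[], [], fun w => rfl⟩
  | succ N ih =>
    intro p q hlen hp hq
    match p, q with
    | [], q => exact ⟨q, [], fun w => rfl⟩
    | p, [] => exact ⟨[], p, fun w => rfl⟩
    | a :: p', b :: q' =>
      rcases lt_trichotomy a b with hab | hab | hab
      · obtain ⟨c, dd, hcd⟩ := ih p' ((b :: q').map (· + d))
          (by simp at hlen ⊢; omega) ((List.isChain_cons.1 hp).2) (srt_map_add d hq)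
        refine ⟨c, a :: dd, fun w => ?_⟩
        calc actW d (a :: p') (actW d c w) = ins d a (actW d p' (actW d c w)) := rfl
          _ = ins d a (actW d ((b :: q').map (· + d)) (actW d dd w)) := by rw [hcd w]
          _ = actW d (b :: q') (ins d a (actW d dd w)) :=
              (actW_ins_low d (all_gt_of_srt_cons hq hab) _).symm
          _ = actW d (b :: q') (actW d (a :: dd) w) := rfl
      · subst hab
        obtain ⟨c, dd, hcd⟩ := ih p' q' (by simp at hlen ⊢; omega)
          ((List.isChain_cons.1 hp).2) ((List.isChain_cons.1 hq).2)
        exact ⟨c, dd, fun w => by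
          simp only [actW_cons]; rw [hcd w]⟩
      · obtain ⟨c, dd, hcd⟩ := ih ((a :: p').map (· + d)) q'
          (by simp at hlen ⊢; omega) (srt_map_add d hp) ((List.isChain_cons.1 hq).2)
        refine ⟨b :: c, dd, fun w => ?_⟩
        calc actW d (a :: p') (actW d (b :: c) w)
            = actW d (a :: p') (ins d b (actW d c w)) := rfl
          _ = ins d b (actW d ((a :: p').map (· + d)) (actW d c w)) :=
              actW_ins_low d (all_gt_of_srt_cons hp hab) _
          _ = ins d b (actW d q' (actW d dd w)) := by rw [hcd w]
          _ = actW d (b :: q') (actW d dd w) := rfl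


/-! ### The positive monoid as endofunctions -/

open MulOpposite

/-- generator as an endofunction -/
def insE (a : ℕ) : Function.End (List ℕ) := ins d a

/-- the word action as an endofunction -/
def actE (l : List ℕ) : Function.End (List ℕ) := actW d l

/-- The positive Thompson monoid. -/
def PM : Submonoid (Function.End (List ℕ)) := Submonoid.closure (Set.range (insE d))

lemma actE_nil : actE d [] = 1 := rfl

lemma actE_cons (a : ℕ) (l : List ℕ) : actE d (a :: l) = insE d a * actE d l := rfl

lemma actE_mem (l : List ℕ) : actE d l ∈ PM d := by
  induction l with
  | nil => exact one_mem _
  | cons a l ih =>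
    rw [actE_cons]
    exact mul_mem (Submonoid.subset_closure ⟨a, rfl⟩) ih

lemma PM_act {f : Function.End (List ℕ)} (hf : f ∈ PM d) :
    ∀ w, f w = actW d (f []) w := by
  induction hf using Submonoid.closure_induction with
  | mem x hx =>
    obtain ⟨a, rfl⟩ := hx
    intro w
    rfl
  | one => intro w; rfl
  | mul f g hf hg ihf ihg =>
    intro w
    have h1 : (f * g) w = f (g w) := rfl
    have h2 : (f * g) [] = actW d (f []) (g []) := ihf (g [])
    rw [h1, h2, actW_actW, ihf (g w), ihg w]

lemma PM_srt {f : Function.End (List ℕ)} (hf : f ∈ PM d) : Srt (f []) := by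
  have : ∀ w, Srt w → Srt (f w) := by
    induction hf using Submonoid.closure_induction with
    | mem x hx =>
      obtain ⟨a, rfl⟩ := hx
      intro w hw
      exact srt_ins d hw a
    | one => exact fun w hw => hw
    | mul f g hf hg ihf ihg => exact fun w hw => ihf (g w) (ihg w hw)
  exact this [] (by simp [Srt, List.Chain'])

lemma PM_inj {f : Function.End (List ℕ)} (hf : f ∈ PM d) : Function.Injective f := by
  induction hf using Submonoid.closure_induction with
  | mem x hx =>
    obtain ⟨a, rfl⟩ := hx
    exact fun w w' h => ins_inj d w a w' h
  | one => exact fun w w' h => h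
  | mul f g hf hg ihf ihg => exact fun w w' h => ihg (ihf h)

/-- The element of `PM` given by a word. -/
def pel (l : List ℕ) : ↥(PM d) := ⟨actE d l, actE_mem d l⟩

lemma pel_eq_of_funeq {l m : List ℕ} (h : actW d l [] = actW d m []) :
    pel d l = pel d m := by
  apply Subtype.ext
  funext w
  show actW d l w = actW d m w
  rw [← actW_nrm d l w, ← actW_nrm d m w, nrm, nrm, h]

/-- every element of PM is a `pel` -/
lemma eq_pel (f : ↥(PM d)) : f = pel d ((f : Function.End (List ℕ)) []) := by
  apply Subtype.ext
  funext w
  show (f : Function.End (List ℕ)) w = actW d ((f : Function.End (List ℕ)) []) w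
  exact PM_act d f.2 w

/-- The opposite monoid, to match mathlib's left-Ore localization conventions. -/
abbrev RM := (↥(PM d))ᵐᵒᵖ

lemma ore_ex (r : RM d) (s : (⊤ : Submonoid (RM d))) :
    ∃ (r' : RM d) (s' : (⊤ : Submonoid (RM d))), (s' : RM d) * r = r' * s := by
  set f : ↥(PM d) := unop r with hf
  set g : ↥(PM d) := unop (s : RM d) with hg
  set p := (f : Function.End (List ℕ)) [] with hp
  set q := (g : Function.End (List ℕ)) [] with hq
  obtain ⟨c, dd, hcd⟩ := oreI d (p.length + q.length) p q le_rfl (PM_srt d f.2) (PM_srt d g.2)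
  refine ⟨op (pel d dd), ⟨op (pel d c), trivial⟩, ?_⟩
  show op (pel d c) * r = op (pel d dd) * op g
  rw [← op_unop r, ← op_mul, ← op_mul]
  congr 1
  apply Subtype.ext
  funext w
  show (f : Function.End (List ℕ)) (actE d c w) = (g : Function.End (List ℕ)) (actE d dd w)
  rw [PM_act d f.2, PM_act d g.2, ← hp, ← hq]
  exact hcd w

noncomputable instance oresetRM : OreLocalization.OreSet (⊤ : Submonoid (RM d)) where
  ore_right_cancel r₁ r₂ s h := by
    refine ⟨1, ?_⟩
    have h' : unop (s : RM d) * unop r₁ = unop (s : RM d) * unop r₂ := by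
      have := congrArg unop h
      simpa using this
    have h'' : unop r₁ = unop r₂ := by
      have hinj := PM_inj d (unop (s : RM d)).2
      have : ((unop (s : RM d) * unop r₁ : ↥(PM d)) : Function.End (List ℕ)) =
          ((unop (s : RM d) * unop r₂ : ↥(PM d)) : Function.End (List ℕ)) := by
        rw [h']
      apply Subtype.ext
      funext w
      exact hinj (congrFun this w)
    simp only [OneMemClass.coe_one, one_mul]
    rw [← op_unop r₁, ← op_unop r₂, h'']
  oreNum r s := Classical.choose (ore_ex d r s)
  oreDenom r s := Classical.choose (Classical.choose_spec (ore_ex d r s))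
  ore_eq r s := Classical.choose_spec (Classical.choose_spec (ore_ex d r s))

/-- The (Ore localization) fraction monoid in which the positive monoid embeds with
all elements becoming invertible. -/
noncomputable abbrev TM := OreLocalization (⊤ : Submonoid (RM d)) (RM d)

noncomputable def nu : RM d →* TM d := OreLocalization.numeratorHom

lemma nu_isUnit (r : RM d) : IsUnit (nu d r) :=
  OreLocalization.numerator_isUnit (⟨r, trivial⟩ : (⊤ : Submonoid (RM d)))

lemma nu_inj : Function.Injective (nu d) := by
  intro r₁ r₂ h
  rw [nu, OreLocalization.numeratorHom_apply, OreLocalization.numeratorHom_apply,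
    OreLocalization.oreDiv_eq_iff] at h
  obtain ⟨u, v, h1, h2⟩ := h
  simp only [OneMemClass.coe_one, mul_one] at h2
  subst h2
  simp only [Submonoid.smul_def, smul_eq_mul] at h1
  -- h1 : ↑u * r₂ = ↑u * r₁ in RM d
  have h' : unop r₂ * unop (u : RM d) = unop r₁ * unop (u : RM d) := by
    have := congrArg unop h1
    simpa using this
  -- now use right cancellation
  have hfun : ∀ w, ((unop r₂ : ↥(PM d)) : Function.End (List ℕ))
      (((unop (u : RM d) : ↥(PM d)) : Function.End (List ℕ)) w) =
      ((unop r₁ : ↥(PM d)) : Function.End (List ℕ))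
      (((unop (u : RM d) : ↥(PM d)) : Function.End (List ℕ)) w) := by
    intro w
    have : ((unop r₂ * unop (u : RM d) : ↥(PM d)) : Function.End (List ℕ)) =
        ((unop r₁ * unop (u : RM d) : ↥(PM d)) : Function.End (List ℕ)) := by rw [h']
    exact congrFun this w
  have hsrtu : Srt (((unop (u : RM d) : ↥(PM d)) : Function.End (List ℕ)) []) :=
    PM_srt d (unop (u : RM d)).2
  have key : ((unop r₂ : ↥(PM d)) : Function.End (List ℕ)) [] =
      ((unop r₁ : ↥(PM d)) : Function.End (List ℕ)) [] := by
    have h0 := hfun []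
    rw [PM_act d (unop r₂).2, PM_act d (unop r₁).2] at h0
    refine right_cancel_list d (((unop (u : RM d) : ↥(PM d)) : Function.End (List ℕ)) []) _ _
      (PM_srt d (unop r₂).2) (PM_srt d (unop r₁).2) ?_
    rw [show actW d (((unop (u : RM d) : ↥(PM d)) : Function.End (List ℕ)) []) [] =
      ((unop (u : RM d) : ↥(PM d)) : Function.End (List ℕ)) [] from nrm_of_srt d hsrtu]
    exact h0
  have : unop r₂ = unop r₁ := by
    apply Subtype.ext
    funext w
    rw [PM_act d (unop r₂).2 w, PM_act d (unop r₁).2 w, key]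
  rw [← op_unop r₁, ← op_unop r₂, this]


end ThompsonAux

namespace ThompsonAux

variable (n : ℕ)

/-- the relation in the group -/
lemma relG (hn : 2 ≤ n) {i j : ℕ} (h : j < i) :
    xg n i * xg n j = xg n j * xg n (i + (n - 1)) := by
  have hr : ((FreeGroup.of j)⁻¹ * FreeGroup.of i * FreeGroup.of j *
      (FreeGroup.of (i + n - 1))⁻¹) ∈ thompsonRels n := ⟨i, j, h, rfl⟩
  have h1 : PresentedGroup.mk (thompsonRels n) ((FreeGroup.of j)⁻¹ * FreeGroup.of i *
      FreeGroup.of j * (FreeGroup.of (i + n - 1))⁻¹) = 1 :=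
    (QuotientGroup.eq_one_iff _).2 (Subgroup.subset_normalClosure hr)
  simp only [map_mul, map_inv] at h1
  have h2 : (xg n j)⁻¹ * xg n i * xg n j = xg n (i + n - 1) := by
    rw [← mul_inv_eq_one]
    exact h1
  have h3 : i + n - 1 = i + (n - 1) := by omega
  rw [← h3, ← h2]
  group

/-- the product of generators along a word -/
def xw (l : List ℕ) : FnInfty n := (l.map (xg n)).prod

@[simp] lemma xw_nil : xw n [] = 1 := rfl

@[simp] lemma xw_cons (a : ℕ) (l : List ℕ) : xw n (a :: l) = xg n a * xw n l := by
  simp [xw]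

lemma xw_append (u v : List ℕ) : xw n (u ++ v) = xw n u * xw n v := by
  simp [xw]

lemma xw_ins (hn : 2 ≤ n) (a : ℕ) (m : List ℕ) :
    xg n a * xw n m = xw n (ins (n - 1) a m) := by
  induction m generalizing a with
  | nil => simp
  | cons b t ih =>
    rw [ins_cons]
    by_cases h : a ≤ b
    · rw [if_pos h, xw_cons, xw_cons, xw_cons]
    · rw [if_neg h, xw_cons, xw_cons, ← mul_assoc,
        relG n hn (by omega : b < a), mul_assoc, ih (a + (n - 1))]

lemma xw_nrm (hn : 2 ≤ n) (l : List ℕ) : xw n l = xw n (nrm (n - 1) l) := by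
  induction l with
  | nil => rfl
  | cons a l ih =>
    have : nrm (n - 1) (a :: l) = ins (n - 1) a (nrm (n - 1) l) := rfl
    rw [this, xw_cons, ih, xw_ins n hn]

lemma xw_actW (hn : 2 ≤ n) (u v : List ℕ) :
    xw n (u ++ v) = xw n (actW (n - 1) u (actW (n - 1) v [])) := by
  rw [xw_nrm n hn (u ++ v)]
  congr 1
  rw [nrm, actW_append]

/-- common right multiples in the group -/
lemma oreG (hn : 2 ≤ n) (p q : List ℕ) :
    ∃ c dd : List ℕ, xw n p * xw n c = xw n q * xw n dd := by
  set d := n - 1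
  obtain ⟨c, dd, hcd⟩ := oreI d ((nrm d p).length + (nrm d q).length) (nrm d p) (nrm d q)
    le_rfl (srt_nrm d p) (srt_nrm d q)
  refine ⟨c, dd, ?_⟩
  rw [xw_nrm n hn p, xw_nrm n hn q, ← xw_append, ← xw_append,
    xw_actW n hn (nrm d p) c, xw_actW n hn (nrm d q) dd, hcd]

/-- every element of the group is a fraction of positive words -/
lemma frac (hn : 2 ≤ n) (g : FnInfty n) :
    ∃ p q : List ℕ, g = xw n p * (xw n q)⁻¹ := by
  have hmem : g ∈ (⊤ : Subgroup (FnInfty n)) := trivial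
  rw [← PresentedGroup.closure_range_of (thompsonRels n)] at hmem
  induction hmem using Subgroup.closure_induction with
  | mem x hx =>
    obtain ⟨i, rfl⟩ := hx
    exact ⟨[i], [], by simp [xw]; rfl⟩
  | one => exact ⟨[], [], by simp⟩
  | mul x y hx hy ihx ihy =>
    obtain ⟨p₁, q₁, rfl⟩ := ihx
    obtain ⟨p₂, q₂, rfl⟩ := ihy
    obtain ⟨c, dd, hcd⟩ := oreG n hn q₁ p₂
    refine ⟨p₁ ++ c, q₂ ++ dd, ?_⟩
    have h1 : (xw n q₁)⁻¹ * xw n p₂ = xw n c * (xw n dd)⁻¹ := by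
      have h2 : xw n p₂ = xw n q₁ * xw n c * (xw n dd)⁻¹ := by rw [hcd]; group
      rw [h2]; group
    rw [xw_append, xw_append, mul_inv_rev]
    calc xw n p₁ * (xw n q₁)⁻¹ * (xw n p₂ * (xw n q₂)⁻¹)
        = xw n p₁ * ((xw n q₁)⁻¹ * xw n p₂) * (xw n q₂)⁻¹ := by group
      _ = xw n p₁ * (xw n c * (xw n dd)⁻¹) * (xw n q₂)⁻¹ := by rw [h1]
      _ = xw n p₁ * xw n c * ((xw n dd)⁻¹ * (xw n q₂)⁻¹) := by group
  | inv x hx ihx =>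
    obtain ⟨p, q, rfl⟩ := ihx
    exact ⟨q, p, by group⟩


/-! ### The shift endomorphism and the embedding into the fraction group -/

open MulOpposite

/-- the shift endomorphism x_i ↦ x_{i+1} -/
noncomputable def sig (hn : 2 ≤ n) : FnInfty n →* FnInfty n :=
  PresentedGroup.toGroup (f := fun i => xg n (i + 1)) (by
    rintro r ⟨i, j, hlt, rfl⟩
    simp only [map_mul, map_inv, FreeGroup.lift_apply_of]
    rw [mul_inv_eq_one]
    have h2 := relG n hn (show j + 1 < i + 1 by omega)
    have h3 : i + 1 + (n - 1) = i + n - 1 + 1 := by omega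
    rw [h3] at h2
    rw [mul_assoc, h2, inv_mul_cancel_left])

lemma sig_of (hn : 2 ≤ n) (i : ℕ) : sig n hn (xg n i) = xg n (i + 1) :=
  PresentedGroup.toGroup.of _

lemma sig_xw (hn : 2 ≤ n) (l : List ℕ) :
    sig n hn (xw n l) = xw n (l.map (· + 1)) := by
  induction l with
  | nil => simp
  | cons a l ih => simp [map_mul, sig_of, ih]

/-- the unit attached to a positive word -/
noncomputable def vw (l : List ℕ) : (TM (n - 1))ˣ :=
  (nu_isUnit (n - 1) (op (pel (n - 1) l))).unit

lemma vw_coe (l : List ℕ) : (vw n l : TM (n - 1)) = nu (n - 1) (op (pel (n - 1) l)) :=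
  IsUnit.unit_spec _

lemma pel_cons (a : ℕ) (l : List ℕ) :
    pel (n - 1) [a] * pel (n - 1) l = pel (n - 1) (a :: l) := by
  apply Subtype.ext
  show actE (n - 1) [a] * actE (n - 1) l = actE (n - 1) (a :: l)
  rw [actE_cons, actE_cons, actE_nil, mul_one]

lemma vw_cons (a : ℕ) (l : List ℕ) : vw n (a :: l) = vw n l * vw n [a] := by
  apply Units.ext
  rw [Units.val_mul, vw_coe, vw_coe, vw_coe, ← map_mul, ← op_mul, pel_cons]

lemma vw_nil : vw n [] = 1 := by
  apply Units.ext
  rw [vw_coe]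
  have : pel (n - 1) ([] : List ℕ) = 1 := rfl
  rw [this, op_one, map_one, Units.val_one]

lemma vw_swap (hn : 2 ≤ n) {i j : ℕ} (hlt : j < i) :
    vw n [i, j] = vw n [j, i + n - 1] := by
  apply Units.ext
  rw [vw_coe, vw_coe]
  congr 1
  apply congrArg
  apply Subtype.ext
  funext w
  show actW (n - 1) [i, j] w = actW (n - 1) [j, i + n - 1] w
  simp only [actW_cons, actW_nil]
  have h3 : i + n - 1 = i + (n - 1) := by omega
  rw [h3]
  exact ins_comm (n - 1) w hlt

/-- the homomorphism into the units of the fraction monoid -/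
noncomputable def phi (hn : 2 ≤ n) : FnInfty n →* (TM (n - 1))ˣ :=
  PresentedGroup.toGroup (f := fun i => (vw n [i])⁻¹) (by
    rintro r ⟨i, j, hlt, rfl⟩
    simp only [map_mul, map_inv, FreeGroup.lift_apply_of]
    rw [mul_inv_eq_one]
    have key : vw n [j] * vw n [i] = vw n [i + n - 1] * vw n [j] := by
      rw [← vw_cons, ← vw_cons]
      exact vw_swap n hn hlt
    have h2 : (vw n [i])⁻¹ * (vw n [j])⁻¹ = (vw n [j])⁻¹ * (vw n [i + n - 1])⁻¹ := by
      rw [← mul_inv_rev, ← mul_inv_rev, key]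
    rw [mul_assoc, h2, inv_mul_cancel_left])

lemma phi_of (hn : 2 ≤ n) (i : ℕ) : phi n hn (xg n i) = (vw n [i])⁻¹ :=
  PresentedGroup.toGroup.of _

lemma phi_xw (hn : 2 ≤ n) (l : List ℕ) : phi n hn (xw n l) = (vw n l)⁻¹ := by
  induction l with
  | nil => simp [vw_nil]
  | cons a l ih =>
    rw [xw_cons, map_mul, phi_of, ih, ← mul_inv_rev, ← vw_cons]

/-- equality of words in the group forces equality of normal forms -/
lemma xw_eq_nrm (hn : 2 ≤ n) {l m : List ℕ} (h : xw n l = xw n m) :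
    nrm (n - 1) l = nrm (n - 1) m := by
  have h1 := congrArg (phi n hn) h
  rw [phi_xw n hn, phi_xw n hn, inv_inj] at h1
  have h2 : nu (n - 1) (op (pel (n - 1) l)) = nu (n - 1) (op (pel (n - 1) m)) := by
    rw [← vw_coe, ← vw_coe, h1]
  have h3 := op_injective (nu_inj (n - 1) h2)
  have h4 : actE (n - 1) l = actE (n - 1) m := congrArg Subtype.val h3
  exact congrFun h4 []


/-- normalization commutes with the index shift -/
lemma nrm_map_shift (l : List ℕ) (c : ℕ) :
    nrm (n - 1) (l.map (· + c)) = (nrm (n - 1) l).map (· + c) := by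
  have := actW_map_add (n - 1) c l []
  simpa [nrm] using this

lemma sig_injective (hn : 2 ≤ n) : Function.Injective (sig n hn) := by
  have : (sig n hn).ker = ⊥ := by
    rw [eq_bot_iff]
    intro g hg
    rw [MonoidHom.mem_ker] at hg
    obtain ⟨p, q, rfl⟩ := frac n hn g
    rw [map_mul, map_inv, sig_xw, sig_xw] at hg
    have h1 : xw n (p.map (· + 1)) = xw n (q.map (· + 1)) := by
      rw [← mul_inv_eq_one]
      exact hg
    have h2 := xw_eq_nrm n hn h1
    rw [nrm_map_shift, nrm_map_shift] at h2
    have h3 : nrm (n - 1) p = nrm (n - 1) q := by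
      have hinj : Function.Injective (fun x : ℕ => x + 1) := fun a b hab => by simpa using hab
      exact List.map_injective_iff.2 hinj h2
    have h4 : xw n p = xw n q := by rw [xw_nrm n hn p, xw_nrm n hn q, h3]
    simp [Subgroup.mem_bot, h4]
  exact (MonoidHom.ker_eq_bot_iff _).1 this

lemma xg_mem_Msub (hn : 2 ≤ n) : ∀ m, 1 ≤ m → xg n m ∈ Msub n := by
  intro m
  induction m using Nat.strong_induction_on with
  | _ m ih =>
    intro hm
    by_cases h : m ≤ n
    · exact Subgroup.subset_closure ⟨m, ⟨hm, h⟩, rfl⟩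
    · have h1 : 1 ≤ m - n + 1 := by omega
      have h2 : m - n + 1 < m := by omega
      have hx1 : xg n 1 ∈ Msub n := Subgroup.subset_closure ⟨1, ⟨le_refl 1, by omega⟩, rfl⟩
      have hxm : xg n (m - n + 1) ∈ Msub n := ih _ h2 h1
      have hrel := relG n hn (show 1 < m - n + 1 by omega)
      have h3 : m - n + 1 + (n - 1) = m := by omega
      rw [h3] at hrel
      have h4 : xg n m = (xg n 1)⁻¹ * xg n (m - n + 1) * xg n 1 := by
        rw [mul_assoc, hrel, inv_mul_cancel_left]
      rw [h4]
      exact mul_mem (mul_mem (inv_mem hx1) hxm) hx1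

lemma sig_range (hn : 2 ≤ n) : (sig n hn).range = Msub n := by
  apply le_antisymm
  · rw [MonoidHom.range_eq_map, ← PresentedGroup.closure_range_of (thompsonRels n),
      MonoidHom.map_closure]
    apply Subgroup.closure_le _ |>.2
    rintro y ⟨x, ⟨i, rfl⟩, rfl⟩
    exact xg_mem_Msub n hn (i + 1) (by omega)
  · rw [Msub]
    apply Subgroup.closure_le _ |>.2
    rintro y ⟨i, ⟨hi1, hi2⟩, rfl⟩
    refine ⟨xg n (i - 1), ?_⟩
    rw [sig_of]
    congr 1
    omega

end ThompsonAux


/-- The map sending `x_i ↦ x_{i-1}` (for `i ≥ 1`) extends to a group isomorphism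
`θ : M ≃ F_{n,∞}`, where `M = ⟨x_1, ..., x_n⟩`. -/
theorem stmt_9 (n : ℕ) (hn : 2 ≤ n) :
    ∃ θ : ↥(Msub n) ≃* FnInfty n,
      ∀ i : ℕ, 1 ≤ i → ∀ h : xg n i ∈ Msub n, θ ⟨xg n i, h⟩ = xg n (i - 1) := by
  classical
  set σ := ThompsonAux.sig n hn with hσ
  have hinj := ThompsonAux.sig_injective n hn
  have hrange := ThompsonAux.sig_range n hn
  let e1 : FnInfty n ≃* σ.range := MonoidHom.ofInjective hinj
  let e2 : (σ.range : Subgroup (FnInfty n)) ≃* ↥(Msub n) := MulEquiv.subgroupCongr hrange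
  let e : FnInfty n ≃* ↥(Msub n) := e1.trans e2
  refine ⟨e.symm, ?_⟩
  intro i hi h
  have key : e (xg n (i - 1)) = ⟨xg n i, h⟩ := by
    apply Subtype.ext
    have h1 : (e (xg n (i - 1)) : FnInfty n) = σ (xg n (i - 1)) := by
      show ((MulEquiv.subgroupCongr hrange (e1 (xg n (i - 1)))) : FnInfty n) = _
      rw [MulEquiv.subgroupCongr_apply]
      exact MonoidHom.ofInjective_apply hinj
    rw [h1, hσ, ThompsonAux.sig_of n hn]
    show xg n (i - 1 + 1) = xg n i
    congr 1
    omega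
  rw [← key, MulEquiv.symm_apply_apply]
end

section
/- Let G = F_{n,∞} and let χ : G → ℝ be a homomorphism such that the homomorphism χ_1 (with χ_1(x_0) = −1, χ_1(x_i) = 0 for i ≥ 1) vanishes on ker χ. Write v_i = χ(x_i) for 0 ≤ i ≤ n−1. Then ℤv_0 ∩ (Σ_{1 ≤ i ≤ n−1} ℤv_i) = 0 and v_0 ≠ 0, so Im(χ) = ℤv_0 ⊕ (Σ_{1 ≤ i ≤ n−1} ℤv_i) as subgroups of ℝ. -/
section Aux
variable {G : Type*} [Group G] {f : G → ℝ}

lemma aux_one (hf : ∀ a b : G, f (a * b) = f a + f b) : f 1 = 0 := by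
  have := hf 1 1; simp at this; linarith

lemma aux_inv (hf : ∀ a b : G, f (a * b) = f a + f b) (a : G) : f a⁻¹ = -f a := by
  have := hf a⁻¹ a; simp at this; rw [aux_one hf] at this; linarith

lemma aux_zpow (hf : ∀ a b : G, f (a * b) = f a + f b) (a : G) (m : ℤ) :
    f (a ^ m) = m * f a := by
  induction m using Int.induction_on with
  | zero => simpa using aux_one hf
  | succ k ih => rw [zpow_add_one, hf, ih]; push_cast; ring
  | pred k ih => rw [zpow_sub_one, hf, ih, aux_inv hf]; push_cast; ring

end Aux

lemma aux_rel (n : ℕ) {f : FnInfty n → ℝ}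
    (hf : ∀ a b : FnInfty n, f (a * b) = f a + f b) {i : ℕ} (hi : 1 ≤ i) :
    f (xg n i) = f (xg n (i + n - 1)) := by
  have hr : ((FreeGroup.of 0)⁻¹ * FreeGroup.of i * FreeGroup.of 0 *
      (FreeGroup.of (i + n - 1))⁻¹ : FreeGroup ℕ) ∈ thompsonRels n := ⟨i, 0, hi, rfl⟩
  have h1 : PresentedGroup.mk (thompsonRels n)
      ((FreeGroup.of 0)⁻¹ * FreeGroup.of i * FreeGroup.of 0 *
        (FreeGroup.of (i + n - 1))⁻¹) = 1 := by
    have : ((FreeGroup.of 0)⁻¹ * FreeGroup.of i * FreeGroup.of 0 *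
        (FreeGroup.of (i + n - 1))⁻¹ : FreeGroup ℕ) ∈
        Subgroup.normalClosure (thompsonRels n) := Subgroup.subset_normalClosure hr
    exact (QuotientGroup.eq_one_iff _).mpr this
  have h2 : (xg n 0)⁻¹ * xg n i * xg n 0 * (xg n (i + n - 1))⁻¹ = 1 := by
    simpa [xg, PresentedGroup.of, map_mul, map_inv] using h1
  have := congrArg f h2
  rw [hf, hf, hf, aux_inv hf, aux_inv hf, aux_one hf] at this
  linarith

lemma aux_reduce (n : ℕ) (hn : 2 ≤ n) {f : FnInfty n → ℝ}
    (hf : ∀ a b : FnInfty n, f (a * b) = f a + f b) :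
    ∀ i : ℕ, 1 ≤ i → ∃ j, 1 ≤ j ∧ j < n ∧ f (xg n i) = f (xg n j) := by
  intro i
  induction i using Nat.strong_induction_on with
  | _ i ih =>
    intro hi
    by_cases h : i < n
    · exact ⟨i, hi, h, rfl⟩
    · push_neg at h
      have h1 : 1 ≤ i - (n - 1) := by omega
      obtain ⟨j, hj1, hj2, hj3⟩ := ih (i - (n - 1)) (by omega) h1
      have heq : f (xg n (i - (n - 1))) = f (xg n i) := by
        have := aux_rel n hf h1
        rwa [show i - (n - 1) + n - 1 = i by omega] at this
      exact ⟨j, hj1, hj2, by rw [← heq, hj3]⟩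

/-- Let `χ : F_{n,∞} → ℝ` be a homomorphism such that `χ₁` (where `χ₁(x_0) = -1` and
`χ₁(x_i) = 0` for `i ≥ 1`) vanishes on `ker χ`, and set `v_i = χ(x_i)`. Then `v_0 ≠ 0` and
`ℤv_0 ∩ (∑_{1 ≤ i ≤ n-1} ℤv_i) = 0`, so `Im χ = ℤv_0 ⊕ (∑_{1 ≤ i ≤ n-1} ℤv_i)` inside `ℝ`. -/
theorem stmt_18 (n : ℕ) (hn : 2 ≤ n) (χ χ₁ : FnInfty n → ℝ)
    (hχ : ∀ a b : FnInfty n, χ (a * b) = χ a + χ b)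
    (hχ₁ : ∀ a b : FnInfty n, χ₁ (a * b) = χ₁ a + χ₁ b)
    (hval0 : χ₁ (xg n 0) = -1) (hvali : ∀ i : ℕ, 1 ≤ i → χ₁ (xg n i) = 0)
    (hker : ∀ g : FnInfty n, χ g = 0 → χ₁ g = 0) :
    χ (xg n 0) ≠ 0 ∧
    AddSubgroup.zmultiples (χ (xg n 0)) ⊓
      AddSubgroup.closure ((fun i => χ (xg n i)) '' {i | 1 ≤ i ∧ i < n}) = ⊥ ∧
    Set.range χ =
      ↑(AddSubgroup.zmultiples (χ (xg n 0)) ⊔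
        AddSubgroup.closure ((fun i => χ (xg n i)) '' {i | 1 ≤ i ∧ i < n})) := by
  -- v₀ ≠ 0
  have hv0 : χ (xg n 0) ≠ 0 := by
    intro h
    have := hker _ h
    rw [hval0] at this
    norm_num at this
  refine ⟨hv0, ?_, ?_⟩
  · -- trivial intersection
    -- every element of the closure is χ g for some g with χ₁ g = 0
    set T₁ : AddSubgroup ℝ :=
      { carrier := {x | ∃ g : FnInfty n, χ g = x ∧ χ₁ g = 0}
        zero_mem' := ⟨1, aux_one hχ, aux_one hχ₁⟩
        add_mem' := by
          rintro a b ⟨g, rfl, hg⟩ ⟨h, rfl, hh⟩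
          exact ⟨g * h, hχ g h, by rw [hχ₁, hg, hh, add_zero]⟩
        neg_mem' := by
          rintro a ⟨g, rfl, hg⟩
          exact ⟨g⁻¹, aux_inv hχ g, by rw [aux_inv hχ₁, hg, neg_zero]⟩ } with hT₁
    have hcl : AddSubgroup.closure ((fun i => χ (xg n i)) '' {i | 1 ≤ i ∧ i < n}) ≤ T₁ := by
      apply AddSubgroup.closure_le T₁ |>.mpr
      rintro x ⟨i, ⟨hi1, _⟩, rfl⟩
      exact ⟨xg n i, rfl, hvali i hi1⟩
    rw [AddSubgroup.eq_bot_iff_forall]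
    rintro x ⟨hx1, hx2⟩
    obtain ⟨m, hm⟩ := AddSubgroup.mem_zmultiples_iff.mp hx1
    obtain ⟨g, hg, hg1⟩ := hcl hx2
    have hz : χ ((xg n 0) ^ m * g⁻¹) = 0 := by
      rw [hχ, aux_zpow hχ, aux_inv hχ, hg]
      rw [← hm]; simp [zsmul_eq_mul]
    have := hker _ hz
    rw [hχ₁, aux_zpow hχ₁, aux_inv hχ₁, hval0, hg1] at this
    have hm0 : m = 0 := by
      have : (m : ℝ) = 0 := by linarith
      exact_mod_cast this
    rw [← hm, hm0, zero_zsmul]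
  · -- range equality
    set S := AddSubgroup.zmultiples (χ (xg n 0)) ⊔
      AddSubgroup.closure ((fun i => χ (xg n i)) '' {i | 1 ≤ i ∧ i < n}) with hS
    ext x
    constructor
    · rintro ⟨g, rfl⟩
      -- the preimage of S is a subgroup containing all generators
      set H : Subgroup (FnInfty n) :=
        { carrier := {g | χ g ∈ S}
          one_mem' := by simp only [Set.mem_setOf_eq, aux_one hχ]; exact zero_mem S
          mul_mem' := by
            intro a b ha hb
            simp only [Set.mem_setOf_eq, hχ] at *
            exact add_mem ha hb
          inv_mem' := by
            intro a ha
            simp only [Set.mem_setOf_eq, aux_inv hχ] at *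
            exact neg_mem ha } with hH
      have hgen : ∀ i : ℕ, xg n i ∈ H := by
        intro i
        rcases Nat.eq_zero_or_pos i with rfl | hi
        · exact AddSubgroup.mem_sup_left
            (AddSubgroup.mem_zmultiples (χ (xg n 0)))
        · obtain ⟨j, hj1, hj2, hj3⟩ := aux_reduce n hn hχ i hi
          have : χ (xg n j) ∈ S := AddSubgroup.mem_sup_right
            (AddSubgroup.subset_closure ⟨j, ⟨hj1, hj2⟩, rfl⟩)
          show χ (xg n i) ∈ S
          rw [hj3]; exact this
      have htop : Subgroup.closure (Set.range (PresentedGroup.of :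
          ℕ → FnInfty n)) ≤ H := by
        apply (Subgroup.closure_le H).mpr
        rintro g ⟨i, rfl⟩
        exact hgen i
      have : g ∈ H := by
        apply htop
        rw [PresentedGroup.closure_range_of]
        trivial
      exact this
    · intro hx
      -- range χ is an additive subgroup containing the generators of S
      set R : AddSubgroup ℝ :=
        { carrier := Set.range χ
          zero_mem' := ⟨1, aux_one hχ⟩
          add_mem' := by
            rintro a b ⟨g, rfl⟩ ⟨h, rfl⟩
            exact ⟨g * h, hχ g h⟩
          neg_mem' := by
            rintro a ⟨g, rfl⟩
            exact ⟨g⁻¹, aux_inv hχ g⟩ } with hR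
      have hSR : S ≤ R := by
        apply sup_le
        · exact (AddSubgroup.zmultiples_le).mpr ⟨xg n 0, rfl⟩
        · apply (AddSubgroup.closure_le R).mpr
          rintro y ⟨i, _, rfl⟩
          exact ⟨xg n i, rfl⟩
      exact hSR hx
end
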